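/- Let K be a rigid symmetric monoidal category and f : x → y a morphism. Suppose z is an object such that (f ⊗ id_z)^{⊗n} = 0 for some n ≥ 1. Then f^{⊗n} ⊗ id_z = 0. -/

import Mathlib

open CategoryTheory CategoryTheory.Limits CategoryTheory.MonoidalCategory
  CategoryTheory.Pretriangulated

namespace Balmer

universe w v u v₂ u₂ v₃ u₃ v₄ u₄

variable {C : Type u} [Category.{v} C]

/-- An object is finitely presented if its coYoneda functor preserves filtered colimits. -/
def IsFP (X : C) : Prop :=
  ∀ (J : Type v) [SmallCategory J] [IsFiltered J],
    Nonempty (PreservesColimitsOfShape J (coyoneda.obj (Opposite.op X)))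

section Monoidal
variable [MonoidalCategory C]

/-- `n`-fold tensor power of an object. -/
def tpow (x : C) : ℕ → C
  | 0 => 𝟙_ C
  | n + 1 => x ⊗ tpow x n

/-- `n`-fold tensor power of a morphism. -/
def tpowHom {x y : C} (f : x ⟶ y) : ∀ n, tpow x n ⟶ tpow y n
  | 0 => 𝟙 _
  | n + 1 => f ⊗ₘ tpowHom f n

/-- `n`-fold tensor power of a morphism out of the unit, as a morphism out of the unit. -/
def upow {z : C} (g : 𝟙_ C ⟶ z) : ∀ n, 𝟙_ C ⟶ tpow z n
  | 0 => 𝟙 _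
  | n + 1 => (λ_ (𝟙_ C)).inv ≫ (g ⊗ₘ upow g n)

/-- A ⊗-multiplicative class of objects: contains the unit and is closed under `⊗`. -/
def IsTensorMultiplicative (S : Set C) : Prop :=
  𝟙_ C ∈ S ∧ ∀ ⦃a⦄, a ∈ S → ∀ ⦃b⦄, b ∈ S → (a ⊗ b) ∈ S

end Monoidal

section SerrePlain
variable [Abelian C]

/-- A Serre subcategory (as a class of objects): contains the zeros and is closed under
subobjects, quotients and extensions. -/
def IsSerre (B : Set C) : Prop :=
  (∀ X : C, IsZero X → X ∈ B) ∧
  (∀ ⦃X Y : C⦄ (i : X ⟶ Y), Mono i → Y ∈ B → X ∈ B) ∧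
  (∀ ⦃X Y : C⦄ (p : X ⟶ Y), Epi p → X ∈ B → Y ∈ B) ∧
  (∀ S : ShortComplex C, S.ShortExact → S.X₁ ∈ B → S.X₃ ∈ B → S.X₂ ∈ B)

end SerrePlain

section SerrePlain2
variable [Abelian C]

/-- A Serre subcategory closed under (small) coproducts (no tensor). -/
def IsLocalizingSub (L : Set C) : Prop :=
  IsSerre L ∧ ∀ (J : Type v) (g : J → C) [HasCoproduct g], (∀ j, g j ∈ L) → (∐ g) ∈ L

/-- The localizing subcategory generated by a class of objects (no tensor). -/
def LocSubGen (S : Set C) : Set C :=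
  {M | ∀ L : Set C, IsLocalizingSub L → S ⊆ L → M ∈ L}

end SerrePlain2

section Serre
variable [Abelian C] [MonoidalCategory C]

/-- A Serre ⊗-ideal: a Serre subcategory closed under tensoring with arbitrary objects. -/
def IsSerreTensorIdeal (B : Set C) : Prop :=
  IsSerre B ∧ ∀ (X : C) ⦃M : C⦄, M ∈ B → (X ⊗ M) ∈ B

/-- A maximal proper Serre ⊗-ideal. -/
def IsMaxSerreTensorIdeal (B : Set C) : Prop :=
  IsSerreTensorIdeal B ∧ 𝟙_ C ∉ B ∧
    ∀ B' : Set C, IsSerreTensorIdeal B' → 𝟙_ C ∉ B' → B ⊆ B' → B' = B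

/-- The Serre ⊗-ideal generated by a class of objects. -/
def SerreTensorGen (S : Set C) : Set C :=
  {M | ∀ L : Set C, IsSerreTensorIdeal L → S ⊆ L → M ∈ L}

/-- A localizing ⊗-ideal: a Serre ⊗-ideal closed under (small) coproducts. -/
def IsLocalizingTensorIdeal (L : Set C) : Prop :=
  IsSerreTensorIdeal L ∧
    ∀ (J : Type v) (g : J → C) [HasCoproduct g], (∀ j, g j ∈ L) → (∐ g) ∈ L

/-- The localizing ⊗-ideal generated by a class of objects. -/
def LocTensorGen (S : Set C) : Set C :=
  {M | ∀ L : Set C, IsLocalizingTensorIdeal L → S ⊆ L → M ∈ L}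

/-- A Serre ⊗-ideal of the full (abelian, monoidal) subcategory of objects in `P`
(e.g. `P` = finitely presented objects). -/
def IsSerreTensorIdealIn (P B : Set C) : Prop :=
  B ⊆ P ∧
  (∀ X : C, IsZero X → X ∈ P → X ∈ B) ∧
  (∀ ⦃X Y : C⦄ (i : X ⟶ Y), Mono i → X ∈ P → Y ∈ B → X ∈ B) ∧
  (∀ ⦃X Y : C⦄ (p : X ⟶ Y), Epi p → Y ∈ P → X ∈ B → Y ∈ B) ∧
  (∀ S : ShortComplex C, S.ShortExact → S.X₂ ∈ P → S.X₁ ∈ B → S.X₃ ∈ B → S.X₂ ∈ B) ∧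
  (∀ ⦃X : C⦄, X ∈ P → ∀ ⦃M : C⦄, M ∈ B → (X ⊗ M) ∈ B)

/-- A maximal proper Serre ⊗-ideal of the full subcategory of objects in `P`. -/
def IsMaxSerreTensorIdealIn (P B : Set C) : Prop :=
  IsSerreTensorIdealIn P B ∧ 𝟙_ C ∉ B ∧
    ∀ B' : Set C, IsSerreTensorIdealIn P B' → 𝟙_ C ∉ B' → B ⊆ B' → B' = B

end Serre

section Tri
variable [Preadditive C] [HasZeroObject C] [HasShift C ℤ]
  [∀ n : ℤ, (shiftFunctor C n).Additive] [Pretriangulated C] [MonoidalCategory C]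

/-- A thick ⊗-ideal of a tensor-triangulated category. -/
def IsThickTensorIdeal (P : Set C) : Prop :=
  (∀ ⦃x y : C⦄, (x ≅ y) → x ∈ P → y ∈ P) ∧
  (∀ (x : C) (n : ℤ), x ∈ P → (shiftFunctor C n).obj x ∈ P) ∧
  (∀ T : Triangle C, T ∈ (distTriang C) → T.obj₁ ∈ P → T.obj₂ ∈ P → T.obj₃ ∈ P) ∧
  (∀ x y : C, (∃ (i : x ⟶ y) (r : y ⟶ x), i ≫ r = 𝟙 x) → y ∈ P → x ∈ P) ∧
  (∀ (x : C) ⦃y : C⦄, y ∈ P → (x ⊗ y) ∈ P)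

/-- A prime thick ⊗-ideal. -/
def IsPrimeThickTensorIdeal (P : Set C) : Prop :=
  IsThickTensorIdeal P ∧ (∃ x : C, x ∉ P) ∧
    ∀ x y : C, (x ⊗ y) ∈ P → x ∈ P ∨ y ∈ P

end Tri

set_option linter.unusedSectionVars false

section AuxA
variable {K : Type u} [Category.{v} K] [Preadditive K] [MonoidalCategory K]

lemma aux_tpowHom_id (z : K) : ∀ n, tpowHom (𝟙 z) n = 𝟙 (tpow z n)
  | 0 => rfl
  | n + 1 => by
    show (𝟙 z) ⊗ₘ tpowHom (𝟙 z) n = 𝟙 (z ⊗ tpow z n)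
    rw [aux_tpowHom_id z n, id_tensorHom_id]

lemma aux_zero_tensor_toUnit {A B N : K} (e : N ⟶ 𝟙_ K) : (0 : A ⟶ B) ⊗ₘ e = 0 := by
  have h : (𝟙 A ⊗ₘ e) ≫ ((0 : A ⟶ B) ⊗ₘ 𝟙 (𝟙_ K)) = (0 : A ⟶ B) ⊗ₘ e := by
    rw [tensorHom_comp_tensorHom]; simp
  rw [← h, tensorHom_id, MonoidalCategory.whiskerRight_id]
  simp

lemma aux_whiskerRight_zero_congr {a b : K} (g : a ⟶ b) {M M' : K} (e : M' ≅ M)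
    (hg : g ▷ M = 0) : g ▷ M' = 0 := by
  have h1 := whisker_exchange g e.hom
  have h3 : g ▷ M' ≫ b ◁ e.hom ≫ b ◁ e.inv = a ◁ e.hom ≫ g ▷ M ≫ b ◁ e.inv := by
    rw [← Category.assoc, ← h1, Category.assoc]
  simp only [whiskerLeft_hom_inv, Category.comp_id] at h3
  rw [h3, hg]; simp

lemma aux_crux {a b c D S : K} (g : a ⟶ b) (hg : g ▷ (c ⊗ D) = 0)
    (i : c ⟶ (c ⊗ D) ⊗ S) (e : D ⊗ S ⟶ 𝟙_ K)
    (zig : i ≫ (α_ c D S).hom ≫ (c ◁ e) ≫ (ρ_ c).hom = 𝟙 c) :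
    g ▷ c = 0 := by
  set r : (c ⊗ D) ⊗ S ⟶ c := (α_ c D S).hom ≫ (c ◁ e) ≫ (ρ_ c).hom with hrdef
  have hir : i ≫ r = 𝟙 c := zig
  have stepA : g ▷ c = (a ◁ i) ≫ (g ▷ ((c ⊗ D) ⊗ S)) ≫ (b ◁ r) := by
    calc g ▷ c = g ⊗ₘ 𝟙 c := (tensorHom_id g c).symm
      _ = g ⊗ₘ (i ≫ r) := by rw [hir]
      _ = (𝟙 a ≫ g) ⊗ₘ (i ≫ r) := by rw [Category.id_comp]
      _ = (𝟙 a ⊗ₘ i) ≫ (g ⊗ₘ r) := by rw [← tensorHom_comp_tensorHom]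
      _ = (a ◁ i) ≫ (g ▷ ((c ⊗ D) ⊗ S)) ≫ (b ◁ r) := by
            rw [id_tensorHom, MonoidalCategory.tensorHom_def]
  have stepB : (g ▷ ((c ⊗ D) ⊗ S)) ≫ (b ◁ r) = 0 := by
    rw [whiskerRight_tensor, hg]
    suffices hkill :
        (((0 : a ⊗ (c ⊗ D) ⟶ b ⊗ (c ⊗ D)) ▷ S) ≫ (α_ b (c ⊗ D) S).hom) ≫ (b ◁ r) = 0 by
      simp only [Category.assoc] at hkill ⊢
      rw [hkill]; simp
    rw [hrdef]
    simp only [MonoidalCategory.whiskerLeft_comp]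
    have pent : (α_ b (c ⊗ D) S).hom ≫ (b ◁ (α_ c D S).hom) =
        ((α_ b c D).inv ▷ S) ≫ (α_ (b ⊗ c) D S).hom ≫ (α_ b c (D ⊗ S)).hom := by
      calc (α_ b (c ⊗ D) S).hom ≫ (b ◁ (α_ c D S).hom)
          = ((α_ b c D).inv ▷ S) ≫ (((α_ b c D).hom ▷ S) ≫ (α_ b (c ⊗ D) S).hom ≫
              (b ◁ (α_ c D S).hom)) := by simp
        _ = ((α_ b c D).inv ▷ S) ≫ (α_ (b ⊗ c) D S).hom ≫ (α_ b c (D ⊗ S)).hom := by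
              rw [MonoidalCategory.pentagon]
    have nat2 : (α_ b c (D ⊗ S)).hom ≫ (b ◁ (c ◁ e)) = ((b ⊗ c) ◁ e) ≫ (α_ b c (𝟙_ K)).hom := by
      rw [tensor_whiskerLeft]; simp
    have split : (0 : a ⊗ (c ⊗ D) ⟶ b ⊗ (c ⊗ D)) =
        (0 : a ⊗ (c ⊗ D) ⟶ (b ⊗ c) ⊗ D) ≫ ((0 : b ⊗ c ⟶ b ⊗ c) ▷ D) ≫ (α_ b c D).hom := by
      simp
    have k1 : (((0 : b ⊗ c ⟶ b ⊗ c) ▷ D) ▷ S) ≫ (α_ (b ⊗ c) D S).hom =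
        (α_ (b ⊗ c) D S).hom ≫ ((0 : b ⊗ c ⟶ b ⊗ c) ▷ (D ⊗ S)) := by
      rw [whiskerRight_tensor]; simp
    have k2 : ((0 : b ⊗ c ⟶ b ⊗ c) ▷ (D ⊗ S)) ≫ ((b ⊗ c) ◁ e) = (0 : b ⊗ c ⟶ b ⊗ c) ⊗ₘ e :=
      (MonoidalCategory.tensorHom_def _ _).symm
    have k3 : (0 : b ⊗ c ⟶ b ⊗ c) ⊗ₘ e = 0 := aux_zero_tensor_toUnit e
    rw [split]
    simp only [comp_whiskerRight, Category.assoc]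
    slice_lhs 4 5 => rw [pent]
    simp only [Category.assoc]
    slice_lhs 3 4 => rw [hom_inv_whiskerRight]
    simp only [Category.id_comp, Category.assoc]
    slice_lhs 2 3 => rw [k1]
    simp only [Category.assoc]
    slice_lhs 4 5 => rw [nat2]
    simp only [Category.assoc]
    slice_lhs 3 4 => rw [k2]
    rw [k3]
    simp
  rw [stepA, stepB]; simp

end AuxA

noncomputable section AuxB
variable {K : Type u} [Category.{v} K] [Preadditive K] [MonoidalCategory K]
  [SymmetricCategory K] [RigidCategory K]

def aux_expander (z : K) : z ⟶ (z ⊗ z) ⊗ zᘁ :=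
  (λ_ z).inv ≫ ((η_ z zᘁ) ▷ z) ≫ (α_ z zᘁ z).hom ≫ (z ◁ (β_ zᘁ z).hom) ≫ (α_ z z zᘁ).inv

def aux_cap (z : K) : z ⊗ zᘁ ⟶ 𝟙_ K := (β_ z zᘁ).hom ≫ (ε_ z zᘁ)

lemma aux_expander_zig (z : K) :
    aux_expander z ≫ (α_ z z zᘁ).hom ≫ (z ◁ aux_cap z) ≫ (ρ_ z).hom = 𝟙 z := by
  rw [aux_expander, aux_cap]
  simp only [Category.assoc, Iso.inv_hom_id_assoc, MonoidalCategory.whiskerLeft_comp]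
  slice_lhs 4 5 => rw [← MonoidalCategory.whiskerLeft_comp, SymmetricCategory.symmetry,
    MonoidalCategory.whiskerLeft_id]
  simp only [Category.id_comp, Category.assoc]
  slice_lhs 2 4 => rw [ExactPairing.evaluation_coevaluation]
  simp

def aux_iV (V z : K) : V ⊗ z ⟶ ((V ⊗ z) ⊗ z) ⊗ zᘁ :=
  (V ◁ aux_expander z) ≫ (α_ V (z ⊗ z) zᘁ).inv ≫ ((α_ V z z).inv ▷ zᘁ)

lemma aux_iV_zig (V z : K) :
    aux_iV V z ≫ (α_ (V ⊗ z) z zᘁ).hom ≫ ((V ⊗ z) ◁ aux_cap z) ≫ (ρ_ (V ⊗ z)).hom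
      = 𝟙 (V ⊗ z) := by
  have s1 : ((α_ V z z).inv ▷ zᘁ) ≫ (α_ (V ⊗ z) z zᘁ).hom =
      (α_ V (z ⊗ z) zᘁ).hom ≫ (V ◁ (α_ z z zᘁ).hom) ≫ (α_ V z (z ⊗ zᘁ)).inv := by
    have p := MonoidalCategory.pentagon V z z zᘁ
    calc ((α_ V z z).inv ▷ zᘁ) ≫ (α_ (V ⊗ z) z zᘁ).hom
        = ((α_ V z z).inv ▷ zᘁ) ≫ ((α_ (V ⊗ z) z zᘁ).hom ≫ (α_ V z (z ⊗ zᘁ)).hom) ≫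
            (α_ V z (z ⊗ zᘁ)).inv := by simp
      _ = ((α_ V z z).inv ▷ zᘁ) ≫ ((α_ V z z).hom ▷ zᘁ ≫ (α_ V (z ⊗ z) zᘁ).hom ≫
            V ◁ (α_ z z zᘁ).hom) ≫ (α_ V z (z ⊗ zᘁ)).inv := by rw [p]
      _ = (α_ V (z ⊗ z) zᘁ).hom ≫ (V ◁ (α_ z z zᘁ).hom) ≫ (α_ V z (z ⊗ zᘁ)).inv := by
            simp
  rw [aux_iV]
  simp only [Category.assoc]
  slice_lhs 3 4 => rw [s1]
  rw [tensor_whiskerLeft V z (aux_cap z), rightUnitor_tensor_hom V z]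
  simp only [Category.assoc, Iso.inv_hom_id_assoc]
  rw [← MonoidalCategory.whiskerLeft_comp, ← MonoidalCategory.whiskerLeft_comp,
      ← MonoidalCategory.whiskerLeft_comp, aux_expander_zig z]
  simp

/-- peel one `z`-factor off the right. -/
lemma aux_peel (V z : K) {a b : K} (g : a ⟶ b) (hg : g ▷ ((V ⊗ z) ⊗ z) = 0) :
    g ▷ (V ⊗ z) = 0 :=
  aux_crux g hg (aux_iV V z) (aux_cap z) (aux_iV_zig V z)

/-- structural iso peeling the last factor of a tensor power. -/
def aux_lastPeel (z : K) : ∀ k, tpow z (k + 1) ≅ tpow z k ⊗ z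
  | 0 => (ρ_ z) ≪≫ (λ_ z).symm
  | k + 1 => (whiskerLeftIso z (aux_lastPeel z k)) ≪≫ (α_ z (tpow z k) z).symm

lemma aux_step (z : K) {a b : K} (g : a ⟶ b) (k : ℕ) (hg : g ▷ tpow z (k + 2) = 0) :
    g ▷ tpow z (k + 1) = 0 := by
  have h1 : g ▷ ((tpow z k ⊗ z) ⊗ z) = 0 := by
    refine aux_whiskerRight_zero_congr g
      (((aux_lastPeel z (k + 1)) ≪≫ (whiskerRightIso (aux_lastPeel z k) z)).symm) hg
  have h2 : g ▷ (tpow z k ⊗ z) = 0 := aux_peel (tpow z k) z g h1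
  exact aux_whiskerRight_zero_congr g (aux_lastPeel z k) h2

lemma aux_down (z : K) {a b : K} (g : a ⟶ b) :
    ∀ m, g ▷ tpow z (m + 1) = 0 → g ▷ tpow z 1 = 0
  | 0, h => h
  | m + 1, h => aux_down z g m (aux_step z g m h)

def aux_shufHom (x z : K) : ∀ n, tpow x n ⊗ tpow z n ⟶ tpow (x ⊗ z) n
  | 0 => (λ_ (𝟙_ K)).hom
  | n + 1 => tensorμ x (tpow x n) z (tpow z n) ≫ ((x ⊗ z) ◁ aux_shufHom x z n)

def aux_shufInv (y w : K) : ∀ n, tpow (y ⊗ w) n ⟶ tpow y n ⊗ tpow w n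
  | 0 => (λ_ (𝟙_ K)).inv
  | n + 1 => ((y ⊗ w) ◁ aux_shufInv y w n) ≫ tensorδ y (tpow y n) w (tpow w n)

lemma aux_shuf_sandwich {x y z w : K} (f : x ⟶ y) (g : z ⟶ w) : ∀ n,
    aux_shufHom x z n ≫ tpowHom (f ⊗ₘ g) n ≫ aux_shufInv y w n = tpowHom f n ⊗ₘ tpowHom g n
  | 0 => by
    show (λ_ (𝟙_ K)).hom ≫ 𝟙 (𝟙_ K) ≫ (λ_ (𝟙_ K)).inv = 𝟙 (𝟙_ K) ⊗ₘ 𝟙 (𝟙_ K)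
    simp [id_tensorHom_id]
  | n + 1 => by
    have IH := aux_shuf_sandwich f g n
    show (tensorμ x (tpow x n) z (tpow z n) ≫ ((x ⊗ z) ◁ aux_shufHom x z n)) ≫
      ((f ⊗ₘ g) ⊗ₘ tpowHom (f ⊗ₘ g) n) ≫
        (((y ⊗ w) ◁ aux_shufInv y w n) ≫ tensorδ y (tpow y n) w (tpow w n)) =
      (f ⊗ₘ tpowHom f n) ⊗ₘ (g ⊗ₘ tpowHom g n)
    have m1 : ((x ⊗ z) ◁ aux_shufHom x z n) ≫ ((f ⊗ₘ g) ⊗ₘ tpowHom (f ⊗ₘ g) n) ≫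
        ((y ⊗ w) ◁ aux_shufInv y w n)
        = (f ⊗ₘ g) ⊗ₘ (aux_shufHom x z n ≫ tpowHom (f ⊗ₘ g) n ≫ aux_shufInv y w n) := by
      rw [← id_tensorHom, ← id_tensorHom, tensorHom_comp_tensorHom, tensorHom_comp_tensorHom,
        Category.id_comp, Category.comp_id]
    calc (tensorμ x (tpow x n) z (tpow z n) ≫ ((x ⊗ z) ◁ aux_shufHom x z n)) ≫
        ((f ⊗ₘ g) ⊗ₘ tpowHom (f ⊗ₘ g) n) ≫
          (((y ⊗ w) ◁ aux_shufInv y w n) ≫ tensorδ y (tpow y n) w (tpow w n))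
        = tensorμ x (tpow x n) z (tpow z n) ≫ (((x ⊗ z) ◁ aux_shufHom x z n) ≫
            ((f ⊗ₘ g) ⊗ₘ tpowHom (f ⊗ₘ g) n) ≫ ((y ⊗ w) ◁ aux_shufInv y w n)) ≫
            tensorδ y (tpow y n) w (tpow w n) := by
          simp only [Category.assoc]
      _ = tensorμ x (tpow x n) z (tpow z n) ≫
            ((f ⊗ₘ g) ⊗ₘ (tpowHom f n ⊗ₘ tpowHom g n)) ≫
            tensorδ y (tpow y n) w (tpow w n) := by
          rw [m1, IH]
      _ = ((f ⊗ₘ tpowHom f n) ⊗ₘ (g ⊗ₘ tpowHom g n)) ≫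
            tensorμ y (tpow y n) w (tpow w n) ≫ tensorδ y (tpow y n) w (tpow w n) := by
          rw [← tensorμ_natural_assoc]
      _ = (f ⊗ₘ tpowHom f n) ⊗ₘ (g ⊗ₘ tpowHom g n) := by
          rw [tensorμ_tensorδ]; simp

lemma aux_baseQ {x y : K} (z : K) (f : x ⟶ y) (n : ℕ) (h : tpowHom (f ⊗ₘ 𝟙 z) n = 0) :
    tpowHom f n ▷ tpow z n = 0 := by
  have h2 := aux_shuf_sandwich f (𝟙 z) n
  rw [h] at h2
  simp only [Limits.zero_comp, Limits.comp_zero] at h2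
  rw [← tensorHom_id, ← aux_tpowHom_id z n]
  exact h2.symm

end AuxB


/-- In a rigid symmetric monoidal category, if `(f ⊗ id_z)^{⊗n} = 0`
for some `n ≥ 1`, then `f^{⊗n} ⊗ id_z = 0`. -/
theorem stmt2 {K : Type u} [Category.{v} K] [Preadditive K] [MonoidalCategory K]
    [SymmetricCategory K] [RigidCategory K] {x y : K} (f : x ⟶ y) (z : K)
    (n : ℕ) (hn : 1 ≤ n) (h : tpowHom (f ⊗ₘ (𝟙 z)) n = 0) :
    tpowHom f n ⊗ₘ (𝟙 z) = 0 := by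
  obtain ⟨m, rfl⟩ : ∃ m, n = m + 1 := ⟨n - 1, (Nat.succ_pred_eq_of_pos hn).symm⟩
  have q : tpowHom f (m + 1) ▷ tpow z (m + 1) = 0 := aux_baseQ z f (m + 1) h
  have q1 : tpowHom f (m + 1) ▷ tpow z 1 = 0 := aux_down z (tpowHom f (m + 1)) m q
  have qz : tpowHom f (m + 1) ▷ z = 0 := by
    refine aux_whiskerRight_zero_congr (tpowHom f (m + 1)) ?_ q1
    exact (ρ_ z).symm
  rw [tensorHom_id]
  exact qz

end Balmer
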